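/- arXiv:1911.04786 — 2 statements merged into one kernel-verified Lean document; each statement's English description precedes it below -/
import Mathlib

section
/- Let ξ ≥ 0. For N ∈ ℕ let σ_N be the sum of the N largest values (with multiplicity) of the doubly-indexed family μ_{(n,m)} := (n+m+2+2ξ)^{-2}, (n,m) ∈ ℕ² (the value (j+2+2ξ)^{-2} occurring with multiplicity j+1). Then (log N)^{-1} σ_N converges to 1/2 as N → ∞. -/
open Finset Filter Real

private lemma seg_lemma (f : ℕ → ℕ) (hf : Monotone f)
    (s : ℕ → Finset ℕ) (hs : ∀ j k, k ∈ s j ↔ f k = j)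
    (hcard : ∀ j, (s j).card = j + 1) (k : ℕ) :
    f k * (f k + 1) ≤ 2 * k ∧ 2 * k + 2 ≤ (f k + 1) * (f k + 2) := by
  set T : ℕ → ℕ := fun j => ∑ i ∈ range j, (i + 1) with hT
  have hTcard : ∀ j, ((range j).biUnion s).card = T j := by
    intro j
    rw [card_biUnion]
    · simp [hT, hcard]
    · intro i hi i' hi' hne
      simp only [disjoint_left]
      intro a ha ha'
      rw [hs] at ha ha'
      exact hne (ha ▸ ha')
  have hmemF : ∀ j a, a ∈ (range j).biUnion s ↔ f a < j := by
    intro j a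
    simp only [mem_biUnion, mem_range, hs]
    constructor
    · rintro ⟨i, hi, rfl⟩; exact hi
    · intro h; exact ⟨f a, h, rfl⟩
  have hseg : ∀ j, f k < j ↔ k < T j := by
    intro j
    constructor
    · intro h
      have hsub : range (k + 1) ⊆ (range j).biUnion s := by
        intro a ha
        rw [mem_range, Nat.lt_succ_iff] at ha
        rw [hmemF]
        exact lt_of_le_of_lt (hf ha) h
      have := card_le_card hsub
      rwa [card_range, hTcard, Nat.succ_le_iff] at this
    · intro h
      by_contra hc
      push_neg at hc
      have hsub : (range j).biUnion s ⊆ range k := by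
        intro a ha
        rw [hmemF] at ha
        rw [mem_range]
        by_contra hak
        push_neg at hak
        exact absurd (lt_of_lt_of_le ha hc) (not_lt.2 (hf hak))
      have := card_le_card hsub
      rw [hTcard, card_range] at this
      omega
  have hT2 : ∀ j, 2 * T j = j * (j + 1) := by
    intro j
    induction j with
    | zero => simp [hT]
    | succ n ih =>
      have hstep : T (n + 1) = T n + (n + 1) := Finset.sum_range_succ _ n
      rw [hstep, Nat.mul_add, ih]
      ring
  have h1 : T (f k) ≤ k := by
    by_contra h
    push_neg at h
    exact absurd ((hseg (f k)).2 h) (lt_irrefl _)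
  have h2 : k < T (f k + 1) := (hseg (f k + 1)).1 (Nat.lt_succ_self _)
  constructor
  · have := Nat.mul_le_mul_left 2 h1
    rwa [hT2] at this
  · have h3 : k + 1 ≤ T (f k + 1) := h2
    have := Nat.mul_le_mul_left 2 h3
    rw [hT2 (f k + 1)] at this
    calc 2 * k + 2 = 2 * (k + 1) := by ring
      _ ≤ (f k + 1) * (f k + 1 + 1) := this
      _ = (f k + 1) * (f k + 2) := by ring

private lemma aux_main (c : ℝ) (hc : 2 ≤ c) (f : ℕ → ℕ)
    (hlow : ∀ k, f k * (f k + 1) ≤ 2 * k)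
    (hupp : ∀ k, 2 * k + 2 ≤ (f k + 1) * (f k + 2)) :
    Tendsto (fun N : ℕ => (Real.log N)⁻¹ * ∑ k ∈ range N, ((f k : ℝ) + c) ^ (-2 : ℝ))
      atTop (nhds (1 / 2)) := by
  have hcpos : (0 : ℝ) < c := lt_of_lt_of_le two_pos hc
  -- rpow to inverse square
  have hrpow : ∀ y : ℝ, 0 ≤ y → y ^ (-2 : ℝ) = ((y ^ 2)⁻¹ : ℝ) := by
    intro y hy
    rw [show (-2 : ℝ) = ((-2 : ℤ) : ℝ) by norm_num, Real.rpow_intCast]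
    simp [zpow_neg, zpow_two, sq]
  set g : ℕ → ℝ := fun k => ((f k : ℝ) + c) ^ (-2 : ℝ) with hgdef
  have hxpos : ∀ k, (0 : ℝ) < (f k : ℝ) + c := fun k =>
    add_pos_of_nonneg_of_pos (Nat.cast_nonneg _) hcpos
  have hgeq : ∀ k, g k = (((f k : ℝ) + c) ^ 2)⁻¹ := fun k => hrpow _ (hxpos k).le
  have hgpos : ∀ k, 0 < g k := by
    intro k; rw [hgeq]; positivity
  -- real versions of the nat inequalities
  have hlowR : ∀ k : ℕ, (f k : ℝ) * ((f k : ℝ) + 1) ≤ 2 * (k : ℝ) := by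
    intro k; exact_mod_cast hlow k
  have huppR : ∀ k : ℕ, 2 * (k : ℝ) + 2 ≤ ((f k : ℝ) + 1) * ((f k : ℝ) + 2) := by
    intro k; exact_mod_cast hupp k
  have hAge : ∀ k : ℕ, 2 * (k : ℝ) + 2 ≤ ((f k : ℝ) + c) ^ 2 := by
    intro k
    have h1 := huppR k
    have h2 : (0 : ℝ) ≤ (f k : ℝ) := Nat.cast_nonneg _
    nlinarith [h1, h2, hc]
  -- upper bound : g k ≤ 1/(2k)
  have hg_le : ∀ k : ℕ, 1 ≤ k → g k ≤ 1 / (2 * (k : ℝ)) := by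
    intro k hk
    have hk1 : (1 : ℝ) ≤ (k : ℝ) := by exact_mod_cast hk
    rw [hgeq, one_div]
    apply inv_anti₀ (by linarith)
    linarith [hAge k]
  -- sqrt bound : sqrt k ≤ f k + c
  have hsq : ∀ k : ℕ, Real.sqrt k ≤ (f k : ℝ) + c := by
    intro k
    have h1 : (k : ℝ) ≤ ((f k : ℝ) + c) ^ 2 := by
      have := hAge k
      have : (0:ℝ) ≤ (k:ℝ) := Nat.cast_nonneg _
      linarith [hAge k]
    calc Real.sqrt k ≤ Real.sqrt (((f k : ℝ) + c) ^ 2) := Real.sqrt_le_sqrt h1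
      _ = (f k : ℝ) + c := Real.sqrt_sq (hxpos k).le
  -- lower bound : 1/(2k) - g k ≤ c / (k * sqrt k)
  have hg_lb : ∀ k : ℕ, 1 ≤ k → 1 / (2 * (k : ℝ)) - g k ≤ c / ((k : ℝ) * Real.sqrt k) := by
    intro k hk
    have hk1 : (1 : ℝ) ≤ (k : ℝ) := by exact_mod_cast hk
    have hkpos : (0 : ℝ) < (k : ℝ) := by linarith
    have hspos : (0 : ℝ) < Real.sqrt k := Real.sqrt_pos.2 hkpos
    have hxc := hxpos k
    have hs := hsq k
    have hA := hAge k
    have hApos : (0 : ℝ) < ((f k : ℝ) + c) ^ 2 := by positivity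
    have hx0 : (0 : ℝ) ≤ (f k : ℝ) := Nat.cast_nonneg _
    have step1 : 1 / (2 * (k : ℝ)) - g k ≤ c / ((k : ℝ) * ((f k : ℝ) + c)) := by
      have h2c : ((f k : ℝ) + c) ^ 2 - 2 * (k : ℝ) ≤ 2 * c * ((f k : ℝ) + c) := by
        nlinarith [hlowR k, hx0, hc]
      have key2 : (((f k : ℝ) + c) ^ 2 - 2 * (k : ℝ)) * ((f k : ℝ) + c)
          ≤ 2 * c * ((f k : ℝ) + c) ^ 2 := by
        nlinarith [mul_le_mul_of_nonneg_right h2c hxc.le]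
      have e1 : 1 / (2 * (k : ℝ)) - g k
          = (((f k : ℝ) + c) ^ 2 - 2 * (k : ℝ)) / (2 * (k : ℝ) * ((f k : ℝ) + c) ^ 2) := by
        rw [hgeq]
        field_simp
      rw [e1, div_le_div_iff₀ (by positivity) (mul_pos hkpos hxc)]
      nlinarith [mul_le_mul_of_nonneg_left key2 hkpos.le]
    have step2 : c / ((k : ℝ) * ((f k : ℝ) + c)) ≤ c / ((k : ℝ) * Real.sqrt k) := by
      apply div_le_div_of_nonneg_left hcpos.le (by positivity)
      exact mul_le_mul_of_nonneg_left hs hkpos.le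
    exact le_trans step1 step2
  -- telescoping log estimates
  have hlog_ub : ∀ k : ℕ, 1 ≤ k → Real.log ((k : ℝ) + 1) - Real.log k ≤ 1 / (k : ℝ) := by
    intro k hk
    have hkpos : (0 : ℝ) < (k : ℝ) := by exact_mod_cast hk
    have h := Real.log_le_sub_one_of_pos (show (0:ℝ) < ((k:ℝ)+1)/(k:ℝ) by positivity)
    rw [Real.log_div (by positivity) (ne_of_gt hkpos)] at h
    have heq : ((k : ℝ) + 1) / (k : ℝ) - 1 = 1 / (k : ℝ) := by field_simp; ring
    linarith
  have hlog_lb : ∀ k : ℕ, 1 ≤ k → 1 / ((k : ℝ) + 1) ≤ Real.log ((k : ℝ) + 1) - Real.log k := by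
    intro k hk
    have hkpos : (0 : ℝ) < (k : ℝ) := by exact_mod_cast hk
    have h := Real.log_le_sub_one_of_pos (show (0:ℝ) < (k:ℝ)/((k:ℝ)+1) by positivity)
    rw [Real.log_div (ne_of_gt hkpos) (by positivity)] at h
    have heq : (k : ℝ) / ((k : ℝ) + 1) - 1 = -(1 / ((k : ℝ) + 1)) := by
      field_simp
      ring
    linarith
  -- the summable majorant
  set w : ℕ → ℝ := fun k => ((k : ℝ) ^ ((3 : ℝ) / 2))⁻¹ with hwdef
  have hw_nonneg : ∀ k, 0 ≤ w k := by intro k; rw [hwdef]; positivity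
  have hw_sum : Summable w := Real.summable_nat_rpow_inv.2 (by norm_num)
  have hw_eq : ∀ k : ℕ, 1 ≤ k → ((k : ℝ) * Real.sqrt k)⁻¹ = w k := by
    intro k hk
    have hkpos : (0 : ℝ) < (k : ℝ) := by exact_mod_cast hk
    have h32 : (k : ℝ) ^ ((3 : ℝ) / 2) = (k : ℝ) * Real.sqrt k := by
      rw [show (3 : ℝ) / 2 = 1 + 1 / 2 by norm_num, Real.rpow_add hkpos, Real.rpow_one,
        Real.sqrt_eq_rpow]
    rw [hwdef]
    simp only [h32]
  set u : ℕ → ℝ := fun k => (if k = 0 then (1 : ℝ) else 0) + (c + 1) * w k with hudef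
  have hu_nonneg : ∀ k, 0 ≤ u k := by
    intro k
    have h1 : (0:ℝ) ≤ (c + 1) * w k := mul_nonneg (by linarith) (hw_nonneg k)
    show (0:ℝ) ≤ (if k = 0 then (1:ℝ) else 0) + (c + 1) * w k
    split <;> linarith
  have hu_sum : Summable u := by
    apply Summable.add
    · apply summable_of_ne_finset_zero (s := {0})
      intro b hb
      simp only [Finset.mem_singleton] at hb
      simp [hb]
    · exact hw_sum.mul_left _
  -- pointwise error bound
  have hD : ∀ k : ℕ,
      |g k - 1 / 2 * (Real.log ((k : ℝ) + 1) - Real.log k)| ≤ u k := by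
    intro k
    rcases Nat.eq_zero_or_pos k with hk0 | hk1
    · subst hk0
      have h1 : Real.log (((0 : ℕ) : ℝ) + 1) = 0 := by norm_num
      have h2 : Real.log ((0 : ℕ) : ℝ) = 0 := by norm_num
      rw [h1, h2]
      have hg0 : g 0 ≤ 1 := by
        rw [hgeq]
        apply inv_le_one_of_one_le₀
        nlinarith [hAge 0]
      have habs : |g 0 - 1 / 2 * ((0:ℝ) - 0)| = g 0 := by
        rw [show ((0:ℝ) - 0) = 0 by ring, mul_zero, sub_zero, abs_of_pos (hgpos 0)]
      rw [habs]
      have hw0 : (0:ℝ) ≤ (c + 1) * w 0 := mul_nonneg (by linarith) (hw_nonneg 0)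
      have hu0 : u 0 = 1 + (c + 1) * w 0 := by
        show (if (0:ℕ) = 0 then (1:ℝ) else 0) + (c + 1) * w 0 = 1 + (c + 1) * w 0
        norm_num
      rw [hu0]
      linarith
    · have hk1' : (1 : ℝ) ≤ (k : ℝ) := by exact_mod_cast hk1
      have hkpos : (0 : ℝ) < (k : ℝ) := by linarith
      have hspos : (0 : ℝ) < Real.sqrt k := Real.sqrt_pos.2 hkpos
      have hub := hlog_ub k hk1
      have hlb := hlog_lb k hk1
      have hgle := hg_le k hk1
      have hglb := hg_lb k hk1
      have hwk := hw_eq k hk1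
      have hkne : k ≠ 0 := Nat.pos_iff_ne_zero.1 hk1
      rw [hudef]
      simp only [if_neg hkne, zero_add]
      rw [abs_le]
      constructor
      · -- lower: -(c+1)w ≤ g - (1/2)Δ
        have c1 : 1 / 2 * (Real.log ((k : ℝ) + 1) - Real.log k) ≤ 1 / (2 * (k : ℝ)) := by
          have e : 1 / (2 * (k:ℝ)) = 1/2 * (1/(k:ℝ)) := by
            rw [one_div, one_div, one_div, mul_inv]
          rw [e]
          apply mul_le_mul_of_nonneg_left hub (by norm_num)
        have c2 : c / ((k : ℝ) * Real.sqrt k) = c * w k := by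
          rw [div_eq_mul_inv, hwk]
        have c3 : c * w k ≤ (c + 1) * w k :=
          mul_le_mul_of_nonneg_right (by linarith) (hw_nonneg k)
        linarith [hglb, c2 ▸ hglb]
      · -- upper: g - (1/2)Δ ≤ (c+1)w
        have c1 : 1 / (2 * ((k : ℝ) + 1)) ≤ 1 / 2 * (Real.log ((k : ℝ) + 1) - Real.log k) := by
          have e : 1 / (2 * ((k:ℝ)+1)) = 1/2 * (1/((k:ℝ)+1)) := by
            rw [one_div, one_div, one_div, mul_inv]
          rw [e]
          apply mul_le_mul_of_nonneg_left hlb (by norm_num)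
        have c2 : 1 / (2 * (k : ℝ)) - 1 / (2 * ((k : ℝ) + 1))
            = 1 / (2 * (k : ℝ) * ((k : ℝ) + 1)) := by
          field_simp
          ring
        have c3 : 1 / (2 * (k : ℝ) * ((k : ℝ) + 1)) ≤ w k := by
          rw [← hwk, one_div]
          apply inv_anti₀ (by positivity)
          have hsk : Real.sqrt k ≤ (k : ℝ) := by
            calc Real.sqrt k ≤ Real.sqrt ((k:ℝ)^2) := Real.sqrt_le_sqrt (by nlinarith)
              _ = (k : ℝ) := Real.sqrt_sq hkpos.le
          nlinarith [hsk, hspos]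
        have c4 : w k ≤ (c + 1) * w k := by
          nth_rewrite 1 [show w k = 1 * w k by ring]
          exact mul_le_mul_of_nonneg_right (by linarith) (hw_nonneg k)
        linarith
  set M : ℝ := ∑' k, u k with hMdef
  have hpart : ∀ N : ℕ, |∑ k ∈ range N,
      (g k - 1 / 2 * (Real.log ((k : ℝ) + 1) - Real.log k))| ≤ M := by
    intro N
    calc |∑ k ∈ range N, (g k - 1 / 2 * (Real.log ((k : ℝ) + 1) - Real.log k))|
        ≤ ∑ k ∈ range N, |g k - 1 / 2 * (Real.log ((k : ℝ) + 1) - Real.log k)| :=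
          Finset.abs_sum_le_sum_abs _ _
      _ ≤ ∑ k ∈ range N, u k := Finset.sum_le_sum fun k _ => hD k
      _ ≤ M := Summable.sum_le_tsum _ (fun k _ => hu_nonneg k) hu_sum
  have hsum_eq : ∀ N : ℕ, ∑ k ∈ range N,
      (g k - 1 / 2 * (Real.log ((k : ℝ) + 1) - Real.log k))
      = (∑ k ∈ range N, g k) - 1 / 2 * Real.log N := by
    intro N
    rw [Finset.sum_sub_distrib, ← Finset.mul_sum]
    congr 1
    congr 1
    calc ∑ k ∈ range N, (Real.log ((k : ℝ) + 1) - Real.log k)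
        = ∑ k ∈ range N, (Real.log ((k + 1 : ℕ) : ℝ) - Real.log k) := by
          apply Finset.sum_congr rfl
          intro k _
          push_cast
          ring_nf
      _ = Real.log N - Real.log ((0 : ℕ) : ℝ) := Finset.sum_range_sub (fun k : ℕ => Real.log k) N
      _ = Real.log N := by norm_num
  -- final assembly
  have hinv0 : Tendsto (fun N : ℕ => (Real.log N)⁻¹) atTop (nhds 0) :=
    Tendsto.inv_tendsto_atTop (Real.tendsto_log_atTop.comp tendsto_natCast_atTop_atTop)
  have herr : Tendsto
      (fun N : ℕ => (Real.log N)⁻¹ * ((∑ k ∈ range N, g k) - 1 / 2 * Real.log N))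
      atTop (nhds 0) := by
    apply squeeze_zero_norm' (a := fun N : ℕ => |(Real.log N)⁻¹| * M)
    · apply Filter.Eventually.of_forall
      intro N
      rw [norm_mul, Real.norm_eq_abs, Real.norm_eq_abs]
      apply mul_le_mul_of_nonneg_left _ (abs_nonneg _)
      rw [← hsum_eq]
      exact hpart N
    · have h0 : Tendsto (fun N : ℕ => |(Real.log N)⁻¹| * M) atTop (nhds (|0| * M)) :=
        (hinv0.abs).mul_const M
      simpa using h0
  have hmain : Tendsto
      (fun N : ℕ => 1 / 2 + (Real.log N)⁻¹ * ((∑ k ∈ range N, g k) - 1 / 2 * Real.log N))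
      atTop (nhds (1 / 2)) := by
    have h2 : Tendsto (fun _ : ℕ => (1:ℝ)/2) atTop (nhds (1/2)) := tendsto_const_nhds
    have := h2.add herr
    simpa using this
  apply Tendsto.congr' _ hmain
  filter_upwards [eventually_ge_atTop 2] with N hN
  have hN1 : (1 : ℝ) < (N : ℝ) := by
    have : (2 : ℝ) ≤ (N : ℝ) := by exact_mod_cast hN
    linarith
  have hlogpos : 0 < Real.log N := Real.log_pos hN1
  have hne : Real.log N ≠ 0 := ne_of_gt hlogpos
  field_simp
  ring

/-- Dixmier-regularized sums of the eigenvalues `(n+m+2+2ξ)⁻²` of the squared resolvent of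
the 2D harmonic oscillator: for any enumeration `β : ℕ ≃ ℕ × ℕ` arranging the family in
nonincreasing order, `(log N)⁻¹ ∑_{k<N} μ_{β(k)} → 1/2`. -/
theorem stmt11 (ξ : ℝ) (hξ : 0 ≤ ξ) (β : ℕ ≃ ℕ × ℕ)
    (hmono : Antitone fun k : ℕ =>
      (((β k).1 : ℝ) + ((β k).2 : ℝ) + 2 + 2 * ξ) ^ (-2 : ℝ)) :
    Filter.Tendsto
      (fun N : ℕ => (Real.log N)⁻¹ *
        ∑ k ∈ Finset.range N, (((β k).1 : ℝ) + ((β k).2 : ℝ) + 2 + 2 * ξ) ^ (-2 : ℝ))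
      Filter.atTop (nhds (1 / 2)) := by
  have hfm : Monotone (fun k : ℕ => (β k).1 + (β k).2) := by
    intro k l hkl
    by_contra h
    push_neg at h
    have hlt : (((β k).1 : ℝ) + ((β k).2 : ℝ) + 2 + 2 * ξ) ^ (-2 : ℝ)
        < (((β l).1 : ℝ) + ((β l).2 : ℝ) + 2 + 2 * ξ) ^ (-2 : ℝ) := by
      apply Real.rpow_lt_rpow_of_neg
      · have h1 : (0 : ℝ) ≤ ((β l).1 : ℝ) := Nat.cast_nonneg _
        have h2 : (0 : ℝ) ≤ ((β l).2 : ℝ) := Nat.cast_nonneg _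
        linarith
      · have : ((β l).1 : ℝ) + ((β l).2 : ℝ) < ((β k).1 : ℝ) + ((β k).2 : ℝ) := by
          have := h
          push_cast
          exact_mod_cast this
        linarith
      · norm_num
    have hle := hmono hkl
    simp only at hle
    exact absurd hle (not_le.2 hlt)
  have key : ∀ k, ((β k).1 + (β k).2) * (((β k).1 + (β k).2) + 1) ≤ 2 * k ∧
      2 * k + 2 ≤ (((β k).1 + (β k).2) + 1) * (((β k).1 + (β k).2) + 2) := by
    apply seg_lemma (fun k => (β k).1 + (β k).2) hfm
      (fun j => (Finset.HasAntidiagonal.antidiagonal j).image (fun p => β.symm p))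
    · intro j k
      simp only [Finset.mem_image, Finset.HasAntidiagonal.mem_antidiagonal]
      constructor
      · rintro ⟨p, hp, rfl⟩
        simpa using hp
      · intro hk
        exact ⟨β k, hk, β.symm_apply_apply k⟩
    · intro j
      rw [Finset.card_image_of_injective _ β.symm.injective, Finset.Nat.card_antidiagonal]
  have H := aux_main (2 + 2 * ξ) (by linarith) (fun k => (β k).1 + (β k).2)
    (fun k => (key k).1) (fun k => (key k).2)
  apply H.congr
  intro N
  congr 1
  apply Finset.sum_congr rfl
  intro k _
  congr 1
  push_cast
  ring
end

section
/- Let (μ_n)_{n≥0} be a nonincreasing sequence of nonnegative reals with multiplicities m_n ∈ ℕ such that m_n · μ_n ~ C/n as n → ∞ for some constant C > 0, and suppose α := lim_{N→∞} log(N) / log(∑_{n=0}^{N-1} m_n) exists. Then the regularized sums (log M)^{-1} ∑ (first M terms of the sequence counted with multiplicity) converge to α·C as M → ∞. -/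
open Filter Finset Real Asymptotics

lemma harmonic_sum_div_log :
    Tendsto (fun N : ℕ => (∑ n ∈ range N, ((n : ℝ) + 1)⁻¹) / Real.log N) atTop (nhds 1) := by
  have hT : ∀ N : ℕ, (∑ n ∈ range N, ((n : ℝ) + 1)⁻¹) = (harmonic N : ℝ) := by
    intro N
    rw [harmonic]
    push_cast
    rfl
  have hlog : Tendsto (fun N : ℕ => Real.log N) atTop atTop :=
    Real.tendsto_log_atTop.comp tendsto_natCast_atTop_atTop
  have h0 : Tendsto (fun N : ℕ => ((harmonic N : ℝ) - Real.log N) / Real.log N) atTop (nhds 0) :=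
    Real.tendsto_harmonic_sub_log.div_atTop hlog
  have h1 : Tendsto (fun N : ℕ => ((harmonic N : ℝ) - Real.log N) / Real.log N + 1) atTop
      (nhds (0 + 1)) := h0.add tendsto_const_nhds
  rw [zero_add] at h1
  apply h1.congr'
  filter_upwards [eventually_ge_atTop 2] with N hN
  have hl : Real.log N ≠ 0 :=
    ne_of_gt (Real.log_pos (by exact_mod_cast by omega))
  rw [hT]
  field_simp
  ring

private lemma aux_alg (S T L C : ℝ) (hT : T ≠ 0) : ((S - C * T) / T + C) * (T / L) = S / L := by
  rcases eq_or_ne L 0 with h | h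
  · rw [h, div_zero, div_zero, mul_zero]
  · field_simp
    ring

private lemma aux_div (a b c : ℝ) (hb : b ≠ 0) : a / b * (b / c) = a / c := by
  rcases eq_or_ne c 0 with h | h
  · rw [h, div_zero, div_zero, mul_zero]
  · field_simp

lemma cesaro_harmonic {a : ℕ → ℝ} {C : ℝ}
    (h : Tendsto (fun n : ℕ => (n : ℝ) * a n) atTop (nhds C)) :
    Tendsto (fun N : ℕ => (∑ n ∈ range N, a n) / Real.log N) atTop (nhds C) := by
  set w : ℕ → ℝ := fun n => ((n : ℝ) + 1)⁻¹ with hw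
  have hwpos : ∀ n, 0 < w n := fun n => by positivity
  -- a n → 0
  have ha0 : Tendsto a atTop (nhds 0) := by
    have hinv : Tendsto (fun n : ℕ => ((n : ℝ))⁻¹) atTop (nhds 0) := tendsto_inv_atTop_zero.comp tendsto_natCast_atTop_atTop
    have := h.mul hinv
    rw [mul_zero] at this
    apply this.congr'
    filter_upwards [eventually_ge_atTop 1] with n hn
    have : (n : ℝ) ≠ 0 := by positivity
    field_simp
  -- (n+1) * a n → C
  have hc : Tendsto (fun n : ℕ => ((n : ℝ) + 1) * a n) atTop (nhds C) := by
    have := h.add ha0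
    rw [add_zero] at this
    exact this.congr fun n => by ring
  -- a n - C * w n =o w n
  have hlo : (fun n : ℕ => a n - C * w n) =o[atTop] w := by
    have h1 : (fun n : ℕ => ((n : ℝ) + 1) * a n - C) =o[atTop] (fun _ : ℕ => (1 : ℝ)) :=
      (isLittleO_one_iff ℝ).2 (by have := hc.sub (tendsto_const_nhds (x := C)); simpa using this)
    have h2 := h1.mul_isBigO (isBigO_refl w atTop)
    simp only [one_mul] at h2
    apply h2.congr' ?_ EventuallyEq.rfl
    filter_upwards with n
    have hne : ((n : ℝ) + 1) ≠ 0 := by positivity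
    have hw1 : ((n : ℝ) + 1) * w n = 1 := mul_inv_cancel₀ hne
    field_simp [hw]
    linear_combination (a n) * hw1
  have hwsum : Tendsto (fun N : ℕ => ∑ n ∈ range N, w n) atTop atTop := by
    have := Real.tendsto_harmonic_sub_log.add_atTop
      (Real.tendsto_log_atTop.comp tendsto_natCast_atTop_atTop)
    apply this.congr
    intro N
    simp only [Function.comp]
    rw [harmonic]
    push_cast
    rw [sub_add_cancel]
  have hsumlo := hlo.sum_range (fun i => (hwpos i).le) hwsum
  have hratio : Tendsto (fun N : ℕ =>
      (∑ n ∈ range N, (a n - C * w n)) / (∑ n ∈ range N, w n)) atTop (nhds 0) :=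
    hsumlo.tendsto_div_nhds_zero
  have hfinal := (hratio.add (tendsto_const_nhds (x := C))).mul harmonic_sum_div_log
  rw [zero_add] at hfinal
  have : C * 1 = C := mul_one C
  rw [this] at hfinal
  apply hfinal.congr'
  filter_upwards [eventually_ge_atTop 1] with N hN
  have hT : (0 : ℝ) < ∑ n ∈ range N, w n :=
    Finset.sum_pos (fun i _ => hwpos i) (Finset.nonempty_range_iff.2 (by omega))
  have hTne : (∑ n ∈ range N, w n) ≠ 0 := ne_of_gt hT
  have hsub : (∑ n ∈ range N, (a n - C * w n)) = (∑ n ∈ range N, a n) - C * ∑ n ∈ range N, w n := by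
    rw [Finset.sum_sub_distrib, Finset.mul_sum]
  rw [hsub]
  exact aux_alg _ _ _ _ hTne

/-- Measurability criterion (Alberti–Matthes): if `(μ_n)` is nonincreasing and nonnegative
with multiplicities `m_n` such that `n · m_n μ_n → C > 0` and
`α = lim log N / log(∑_{n<N} m_n)` exists, then the logarithmically regularized partial sums
of the sequence `ν` obtained by repeating `μ_n` with multiplicity `m_n` converge to `α·C`. -/
theorem stmt12 (μ : ℕ → ℝ) (m : ℕ → ℕ) (C α : ℝ) (hC : 0 < C)
    (hnn : ∀ n, 0 ≤ μ n) (hanti : Antitone μ)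
    (hasym : Filter.Tendsto (fun n : ℕ => (n : ℝ) * ((m n : ℝ) * μ n))
      Filter.atTop (nhds C))
    (hα : Filter.Tendsto
      (fun N : ℕ => Real.log N / Real.log (∑ n ∈ Finset.range N, (m n : ℝ)))
      Filter.atTop (nhds α))
    (ν : ℕ → ℝ)
    (hν : ∀ n k : ℕ, (∑ i ∈ Finset.range n, m i) ≤ k →
      k < ∑ i ∈ Finset.range (n + 1), m i → ν k = μ n) :
    Filter.Tendsto (fun M : ℕ => (Real.log M)⁻¹ * ∑ k ∈ Finset.range M, ν k)
      Filter.atTop (nhds (α * C)) := by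
  classical
  set S : ℕ → ℕ := fun N => ∑ i ∈ Finset.range N, m i with hS
  set A : ℕ → ℝ := fun N => ∑ n ∈ Finset.range N, (m n : ℝ) * μ n with hA
  -- eventually positivity
  obtain ⟨n₀, hn₀⟩ : ∃ n₀ : ℕ, ∀ n : ℕ, n₀ ≤ n → 0 < (n : ℝ) * ((m n : ℝ) * μ n) :=
    eventually_atTop.mp (hasym.eventually (lt_mem_nhds hC))
  set n₁ : ℕ := max n₀ 1 with hn₁
  have hm1 : ∀ n ≥ n₁, 1 ≤ m n := by
    intro n hn
    by_contra h
    have hm0 : m n = 0 := by omega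
    have := hn₀ n (le_trans (le_max_left n₀ 1) hn)
    rw [hm0] at this
    simp at this
  -- S is monotone
  have hSmono : Monotone S := by
    intro a b hab
    exact Finset.sum_le_sum_of_subset (Finset.range_subset_range.2 hab)
  -- S N ≥ N - n₁
  have hSge : ∀ N, N - n₁ ≤ S N := by
    intro N
    calc N - n₁ = (Finset.Ico n₁ N).card := by rw [Nat.card_Ico]
    _ = ∑ i ∈ Finset.Ico n₁ N, 1 := by rw [Finset.sum_const, smul_eq_mul, mul_one]
    _ ≤ ∑ i ∈ Finset.Ico n₁ N, m i := Finset.sum_le_sum fun i hi => hm1 i (Finset.mem_Ico.1 hi).1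
    _ ≤ S N := Finset.sum_le_sum_of_subset (by
        rw [Finset.range_eq_Ico]; exact Finset.Ico_subset_Ico (Nat.zero_le _) le_rfl)
  have hStop : Filter.Tendsto S Filter.atTop Filter.atTop := by
    apply Filter.tendsto_atTop_mono hSge
    exact Filter.tendsto_atTop.2 fun b => Filter.eventually_atTop.2 ⟨b + n₁, fun N hN => by omega⟩
  -- sum identity
  have key : ∀ N, ∑ k ∈ Finset.range (S N), ν k = A N := by
    intro N
    induction N with
    | zero => simp [hS, hA]
    | succ N ih =>
      have h1 : S N ≤ S (N + 1) := hSmono (Nat.le_succ N)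
      rw [← Finset.sum_range_add_sum_Ico ν h1, ih]
      have h2 : ∑ k ∈ Finset.Ico (S N) (S (N + 1)), ν k = (m N : ℝ) * μ N := by
        rw [Finset.sum_congr rfl (fun k hk => hν N k (Finset.mem_Ico.1 hk).1 (Finset.mem_Ico.1 hk).2)]
        rw [Finset.sum_const, Nat.card_Ico, nsmul_eq_mul]
        have h3 : S (N + 1) - S N = m N := by
          have h4 : S (N + 1) = S N + m N := Finset.sum_range_succ m N
          omega
        rw [h3]
      rw [h2]
      simp only [hA]
      rw [Finset.sum_range_succ]
  -- Cesàro
  have hAc : Filter.Tendsto (fun N : ℕ => A N / Real.log N) Filter.atTop (nhds C) :=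
    cesaro_harmonic hasym
  have hAnn : ∀ N, 0 ≤ A N := fun N =>
    Finset.sum_nonneg fun n _ => mul_nonneg (Nat.cast_nonneg _) (hnn n)
  -- log S N → ∞
  have hlogS : Filter.Tendsto (fun N => Real.log (S N)) Filter.atTop Filter.atTop :=
    Real.tendsto_log_atTop.comp (tendsto_natCast_atTop_atTop.comp hStop)
  -- hα in terms of S
  have hα' : Filter.Tendsto (fun N : ℕ => Real.log N / Real.log (S N)) Filter.atTop (nhds α) := by
    apply hα.congr
    intro N
    congr 1
    rw [hS]
    push_cast
    rfl
  -- U N := A N / log (S N) → α * C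
  have hU : Filter.Tendsto (fun N => A N / Real.log (S N)) Filter.atTop (nhds (α * C)) := by
    have h1 := hAc.mul hα'
    rw [mul_comm] at h1
    apply h1.congr'
    filter_upwards [Filter.eventually_ge_atTop 2] with N hN
    exact aux_div _ _ _ (ne_of_gt (Real.log_pos (Nat.one_lt_cast.2 (by omega))))
  -- shifted: log N / log (S (N+1)) → α
  have hshift : Filter.Tendsto (fun N : ℕ => Real.log N / Real.log (S (N + 1)))
      Filter.atTop (nhds α) := by
    have h1 : Filter.Tendsto (fun N : ℕ => Real.log (N + 1) / Real.log (S (N + 1)))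
        Filter.atTop (nhds α) := by
      have := hα'.comp (tendsto_add_atTop_nat 1)
      apply this.congr
      intro N
      simp [Function.comp]
    have hq : Filter.Tendsto (fun N : ℕ => Real.log (((N : ℝ) + 1) / N)) Filter.atTop (nhds 0) := by
      have hb : Filter.Tendsto (fun N : ℕ => ((N : ℝ) + 1) / N) Filter.atTop (nhds 1) := by
        have h2 : Filter.Tendsto (fun N : ℕ => 1 + (N : ℝ)⁻¹) Filter.atTop (nhds (1 + 0)) :=
          tendsto_const_nhds.add (tendsto_inv_atTop_zero.comp tendsto_natCast_atTop_atTop)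
        rw [add_zero] at h2
        apply h2.congr'
        filter_upwards [Filter.eventually_ge_atTop 1] with N hN
        have : (N : ℝ) ≠ 0 := by positivity
        field_simp
      have := hb.log one_ne_zero
      rwa [Real.log_one] at this
    have h2 := hq.div_atTop (hlogS.comp (tendsto_add_atTop_nat 1))
    have h3 := h1.sub h2
    rw [sub_zero] at h3
    simp only [Function.comp] at h3
    apply h3.congr'
    filter_upwards [Filter.eventually_ge_atTop 1] with N hN
    have hN0 : (N : ℝ) ≠ 0 := by positivity
    have hN1 : ((N : ℝ) + 1) ≠ 0 := by positivity
    rw [Real.log_div hN1 hN0]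
    push_cast
    ring
  -- L N := A N / log (S (N+1)) → α * C
  have hL : Filter.Tendsto (fun N => A N / Real.log (S (N + 1))) Filter.atTop (nhds (α * C)) := by
    have h1 := hAc.mul hshift
    rw [mul_comm] at h1
    apply h1.congr'
    filter_upwards [Filter.eventually_ge_atTop 2] with N hN
    exact aux_div _ _ _ (ne_of_gt (Real.log_pos (Nat.one_lt_cast.2 (by omega))))
  -- the index function
  set NM : ℕ → ℕ := fun M => Nat.findGreatest (fun N => S N ≤ M) (M + n₁) with hNM
  have hNMle : ∀ M, S (NM M) ≤ M := by
    intro M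
    exact Nat.findGreatest_spec (P := fun N => S N ≤ M) (Nat.zero_le _) (show S 0 ≤ M by simp [hS])
  have hNMlt : ∀ M, M < S (NM M + 1) := by
    intro M
    by_cases h : NM M + 1 ≤ M + n₁
    · have := Nat.findGreatest_is_greatest (P := fun N => S N ≤ M) (lt_add_one (NM M)) h
      omega
    · have h2 : M + 1 ≤ (NM M + 1) - n₁ := by omega
      have := hSge (NM M + 1)
      omega
  have hNMtop : Filter.Tendsto NM Filter.atTop Filter.atTop := by
    apply Filter.tendsto_atTop.2
    intro N
    filter_upwards [Filter.eventually_ge_atTop (max (S N) N)] with M hM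
    exact Nat.le_findGreatest (by omega) (le_trans le_rfl (by omega))
  -- decomposition of partial sums
  set e : ℕ → ℝ := fun M => ((M - S (NM M) : ℕ) : ℝ) * μ (NM M) with he
  have hsum : ∀ M, ∑ k ∈ Finset.range M, ν k = A (NM M) + e M := by
    intro M
    rw [← Finset.sum_range_add_sum_Ico ν (hNMle M), key]
    congr 1
    rw [Finset.sum_congr rfl (fun k hk => hν (NM M) k (Finset.mem_Ico.1 hk).1
      (lt_of_lt_of_le (Finset.mem_Ico.1 hk).2 (hNMlt M).le))]
    rw [Finset.sum_const, Nat.card_Ico, nsmul_eq_mul, he]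
  -- e M → 0
  have hr : Filter.Tendsto (fun n : ℕ => (m n : ℝ) * μ n) Filter.atTop (nhds 0) := by
    have hinv : Filter.Tendsto (fun n : ℕ => ((n : ℝ))⁻¹) Filter.atTop (nhds 0) :=
      tendsto_inv_atTop_zero.comp tendsto_natCast_atTop_atTop
    have h1 := hasym.mul hinv
    rw [mul_zero] at h1
    apply h1.congr'
    filter_upwards [Filter.eventually_ge_atTop 1] with n hn
    have : (n : ℝ) ≠ 0 := by positivity
    field_simp
  have he0 : Filter.Tendsto e Filter.atTop (nhds 0) := by
    apply squeeze_zero (fun M => mul_nonneg (Nat.cast_nonneg _) (hnn _))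
      (g := fun M => (m (NM M) : ℝ) * μ (NM M)) ?_ (hr.comp hNMtop)
    intro M
    apply mul_le_mul_of_nonneg_right _ (hnn _)
    have h1 : M - S (NM M) ≤ m (NM M) := by
      have := hNMlt M
      have h2 : S (NM M + 1) = S (NM M) + m (NM M) := Finset.sum_range_succ m (NM M)
      omega
    exact_mod_cast h1
  -- final squeeze
  have hlower := hL.comp hNMtop
  have hupper : Filter.Tendsto
      (fun M : ℕ => A (NM M) / Real.log (S (NM M)) + e M / Real.log M)
      Filter.atTop (nhds (α * C + 0)) :=
    (hU.comp hNMtop).add (he0.div_atTop (Real.tendsto_log_atTop.comp tendsto_natCast_atTop_atTop))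
  rw [add_zero] at hupper
  apply tendsto_of_tendsto_of_tendsto_of_le_of_le' hlower hupper
  · filter_upwards [Filter.eventually_ge_atTop 2,
      hNMtop.eventually (Filter.eventually_ge_atTop (n₁ + 2))] with M hM2 hMN
    have hlM : 0 < Real.log M := Real.log_pos (Nat.one_lt_cast.2 (by omega))
    have hl2 : Real.log M ≤ Real.log (S (NM M + 1)) :=
      Real.log_le_log (by positivity) (Nat.cast_le.2 (hNMlt M).le)
    have henn : 0 ≤ e M := mul_nonneg (Nat.cast_nonneg _) (hnn _)
    rw [hsum M, inv_mul_eq_div]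
    exact div_le_div₀ (by linarith [hAnn (NM M)]) (by linarith) hlM hl2
  · filter_upwards [Filter.eventually_ge_atTop 2,
      hNMtop.eventually (Filter.eventually_ge_atTop (n₁ + 2))] with M hM2 hMN
    have hlM : 0 < Real.log M := Real.log_pos (Nat.one_lt_cast.2 (by omega))
    have hS2 : 2 ≤ S (NM M) := le_trans (by omega) (hSge (NM M))
    have hl1 : 0 < Real.log (S (NM M)) := Real.log_pos (Nat.one_lt_cast.2 (by omega))
    have hl1le : Real.log (S (NM M)) ≤ Real.log M :=
      Real.log_le_log (by positivity) (Nat.cast_le.2 (hNMle M))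
    have henn : 0 ≤ e M := mul_nonneg (Nat.cast_nonneg _) (hnn _)
    rw [hsum M, inv_mul_eq_div, add_div]
    apply add_le_add_left
    exact div_le_div_of_nonneg_left (hAnn _) hl1 hl1le
end
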